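/- One-step descent under unknown (sample-dependent) Lipschitz continuity: Let ρ > κ + τ and let γ > ρ be deterministic (independent of the sample ξ). Let x ∈ ℝⁿ be fixed and let x⁺(ξ) = argmin_y { f_x(y,ξ) + ω(y) + (γ/2)‖y − x‖² } for ξ ∼ Ξ. Then E_ξ[ψ_{1/ρ}(x⁺(ξ))] ≤ ψ_{1/ρ}(x) − (ρ(ρ − τ − κ)/(2(γ − κ)))‖x̂ − x‖² + E_ξ[ ρ(Lip(x,ξ) + L_ω)² / (2γ(γ − κ)) ], where x̂ = prox_{ψ/ρ}(x). -/

import Mathlib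

open MeasureTheory
open RealInnerProductSpace
open RealInnerProductSpace

lemma affine_inner_convexOn {E : Type*} [NormedAddCommGroup E] [InnerProductSpace ℝ E]
    (v : E) (c d : ℝ) : ConvexOn ℝ Set.univ (fun y : E => c * ⟪y, v⟫ + d) := by
  refine ⟨convex_univ, fun p _ q _ a b ha hb hab => ?_⟩
  simp only [inner_add_left, real_inner_smul_left, smul_eq_mul]
  apply le_of_eq
  linear_combination (-d) * hab

lemma strong_min {E : Type*} [NormedAddCommGroup E] [InnerProductSpace ℝ E]
    (m : ℝ) (hm : 0 < m) (G : E → ℝ)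
    (hG : ConvexOn ℝ Set.univ (fun y => G y - m / 2 * ‖y‖ ^ 2))
    (u : E) (hmin : ∀ y, G u ≤ G y) (y : E) :
    G u + m / 2 * ‖y - u‖ ^ 2 ≤ G y := by
  have key : ∀ t : ℝ, 0 < t → t < 1 → G u + m / 2 * (1 - t) * ‖y - u‖ ^ 2 ≤ G y := by
    intro t ht ht1
    have ha : (0:ℝ) ≤ 1 - t := by linarith
    have hb : (0:ℝ) ≤ t := le_of_lt ht
    have hab : (1 - t) + t = 1 := by ring
    have hc := hG.2 (Set.mem_univ u) (Set.mem_univ y) ha hb hab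
    have hmin' := hmin ((1 - t) • u + t • y)
    -- norm identity
    have hid : (1 - t) * ‖u‖ ^ 2 + t * ‖y‖ ^ 2 - ‖(1 - t) • u + t • y‖ ^ 2
        = (1 - t) * t * ‖u - y‖ ^ 2 := by
      have h1 : ‖(1 - t) • u + t • y‖ ^ 2
          = ‖(1 - t) • u‖ ^ 2 + 2 * ⟪(1 - t) • u, t • y⟫ + ‖t • y‖ ^ 2 :=
        norm_add_sq_real _ _
      have h2 : ⟪(1 - t) • u, t • y⟫ = (1 - t) * (t * ⟪u, y⟫) := by
        rw [real_inner_smul_left, real_inner_smul_right]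
      have h3 : ‖(1 - t) • u‖ ^ 2 = (1 - t) ^ 2 * ‖u‖ ^ 2 := by
        rw [norm_smul, mul_pow, Real.norm_eq_abs, sq_abs]
      have h4 : ‖t • y‖ ^ 2 = t ^ 2 * ‖y‖ ^ 2 := by
        rw [norm_smul, mul_pow, Real.norm_eq_abs, sq_abs]
      have h5 : ‖u - y‖ ^ 2 = ‖u‖ ^ 2 - 2 * ⟪u, y⟫ + ‖y‖ ^ 2 := norm_sub_sq_real u y
      rw [h1, h2, h3, h4, h5]; ring
    have hrw : ‖y - u‖ ^ 2 = ‖u - y‖ ^ 2 := by rw [norm_sub_rev]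
    simp only [smul_eq_mul] at hc
    rw [hrw]
    nlinarith [hc, hmin', hid]
  refine le_of_forall_pos_le_add fun ε hε => ?_
  have hd : (0:ℝ) ≤ ‖y - u‖ ^ 2 := sq_nonneg _
  set D := ‖y - u‖ ^ 2 with hD
  have hden : (0:ℝ) < m / 2 * D + 1 := by positivity
  set t := min (1/2 : ℝ) (ε / (m / 2 * D + 1)) with htdef
  have ht0 : 0 < t := lt_min (by norm_num) (div_pos hε hden)
  have ht1 : t < 1 := lt_of_le_of_lt (min_le_left _ _) (by norm_num)
  have hk := key t ht0 ht1
  have htle : t ≤ ε / (m / 2 * D + 1) := min_le_right _ _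
  have : m / 2 * t * D ≤ ε := by
    have h1 : m / 2 * t * D ≤ m / 2 * (ε / (m / 2 * D + 1)) * D := by
      have := mul_le_mul_of_nonneg_left htle (le_of_lt (half_pos hm))
      nlinarith
    have h2 : m / 2 * (ε / (m / 2 * D + 1)) * D ≤ ε := by
      have heq : m / 2 * (ε / (m / 2 * D + 1)) * D = ε * ((m / 2 * D) / (m / 2 * D + 1)) := by
        field_simp
      have hle1 : (m / 2 * D) / (m / 2 * D + 1) ≤ 1 := by
        rw [div_le_one hden]; linarith
      have hge0 : (0:ℝ) ≤ (m / 2 * D) / (m / 2 * D + 1) := by positivity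
      rw [heq]
      nlinarith
    linarith
  nlinarith [hk, this]



/-- **Lemma 3.4** (one-step descent under unknown, sample-dependent Lipschitz continuity).
The models satisfy D1: `fmod x z s - fmod x y s ≤ Lip(x,s) ‖z - y‖`, and the reference
Lipschitz continuity D2: `E_{ξ,ξ'}[|Lip(x,ξ) - Lip(x,ξ')|²] ≤ σ²`. With `ρ > κ + τ` and a
deterministic `γ > ρ` (independent of the sample), for `x⁺(ξ)` the minimizer of the
regularized model at `x`,
`E_ξ[ψ_{1/ρ}(x⁺(ξ))] ≤ ψ_{1/ρ}(x) - ρ(ρ-τ-κ)/(2(γ-κ)) ‖x̂-x‖²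
  + E_ξ[ρ(Lip(x,ξ) + L_ω)²/(2γ(γ-κ))]`. -/
theorem one_step_descent_unknown_lipschitz
    {n : ℕ} {S : Type*} [MeasurableSpace S] (μ : Measure S) [IsProbabilityMeasure μ]
    (f w ψ : EuclideanSpace ℝ (Fin n) → ℝ)
    (fmod : EuclideanSpace ℝ (Fin n) → EuclideanSpace ℝ (Fin n) → S → ℝ)
    (Lip : EuclideanSpace ℝ (Fin n) → S → ℝ) (κ τ ρ γ Lw σ : ℝ)
    (prox : EuclideanSpace ℝ (Fin n) → EuclideanSpace ℝ (Fin n))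
    (moreau : EuclideanSpace ℝ (Fin n) → ℝ)
    -- basic parameter assumptions
    (hκ : 0 ≤ κ) (hτ : 0 ≤ τ) (hρ : κ + τ < ρ) (hγ : ρ < γ)
    (hLw : 0 ≤ Lw) (hσ : 0 ≤ σ)
    -- composite objective
    (hψdef : ∀ x, ψ x = f x + w x)
    -- A2: `w` is κ-weakly convex and L_ω-Lipschitz
    (hw_weak : ConvexOn ℝ Set.univ (fun x => w x + κ / 2 * ‖x‖ ^ 2))
    (hw_lip : ∀ x y, |w x - w y| ≤ Lw * ‖x - y‖)
    -- A3: properties of the stochastic model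
    (hmodel_conv : ∀ x s, ConvexOn ℝ Set.univ (fun y => fmod x y s))
    (hmodel_int : ∀ x y, Integrable (fun s => fmod x y s) μ)
    (hmodel_center : ∀ x, ∫ s, fmod x x s ∂μ = f x)
    (hmodel_acc : ∀ x y, (∫ s, fmod x y s ∂μ) - f y ≤ τ / 2 * ‖x - y‖ ^ 2)
    -- D1: sample-dependent Lipschitz continuity of the models
    (hLip_nonneg : ∀ x s, 0 ≤ Lip x s)
    (hD1 : ∀ x y z s, fmod x z s - fmod x y s ≤ Lip x s * ‖z - y‖)
    -- D2: reference Lipschitz continuity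
    (hLip_sq_int : ∀ x, Integrable (fun s => Lip x s ^ 2) μ)
    (hD2 : ∀ x, ∫ s, ∫ s', |Lip x s - Lip x s'| ^ 2 ∂μ ∂μ ≤ σ ^ 2)
    -- Moreau envelope `ψ_{1/ρ}` and proximal mapping `prox = prox_{ψ/ρ}`
    (hprox : ∀ x z, ψ (prox x) + ρ / 2 * ‖prox x - x‖ ^ 2 ≤ ψ z + ρ / 2 * ‖z - x‖ ^ 2)
    (hmoreau : ∀ x, moreau x = ψ (prox x) + ρ / 2 * ‖prox x - x‖ ^ 2)
    -- the current point and the stochastic one-step update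
    (x : EuclideanSpace ℝ (Fin n)) (xplus : S → EuclideanSpace ℝ (Fin n))
    (hupdate : ∀ s y,
      fmod x (xplus s) s + w (xplus s) + γ / 2 * ‖xplus s - x‖ ^ 2
        ≤ fmod x y s + w y + γ / 2 * ‖y - x‖ ^ 2)
    (hint : Integrable (fun s => moreau (xplus s)) μ) :
    ∫ s, moreau (xplus s) ∂μ
      ≤ moreau x - ρ * (ρ - τ - κ) / (2 * (γ - κ)) * ‖prox x - x‖ ^ 2
        + ∫ s, ρ * (Lip x s + Lw) ^ 2 / (2 * γ * (γ - κ)) ∂μ := by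
  classical
  set xh := prox x with hxh
  have hρ0 : (0:ℝ) < ρ := by linarith
  have hγ0 : (0:ℝ) < γ := by linarith
  have hγκ : (0:ℝ) < γ - κ := by linarith
  -- strong convexity of the regularized model
  have hFconv : ∀ s, ConvexOn ℝ Set.univ
      (fun y => (fmod x y s + w y + γ / 2 * ‖y - x‖ ^ 2) - (γ - κ) / 2 * ‖y‖ ^ 2) := by
    intro s
    have h1 := (hmodel_conv x s).add (hw_weak.add (affine_inner_convexOn x (-γ) (γ / 2 * ‖x‖ ^ 2)))
    have heq : (fun y => (fmod x y s + w y + γ / 2 * ‖y - x‖ ^ 2) - (γ - κ) / 2 * ‖y‖ ^ 2)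
        = fun y => fmod x y s + ((w y + κ / 2 * ‖y‖ ^ 2) + ((-γ) * ⟪y, x⟫ + γ / 2 * ‖x‖ ^ 2)) := by
      funext y
      have h5 : ‖y - x‖ ^ 2 = ‖y‖ ^ 2 - 2 * ⟪y, x⟫ + ‖x‖ ^ 2 := norm_sub_sq_real y x
      rw [h5]; ring
    rw [heq]; exact h1
  -- strong minimality of the update
  have hstrong : ∀ s, (fmod x (xplus s) s + w (xplus s) + γ / 2 * ‖xplus s - x‖ ^ 2)
      + (γ - κ) / 2 * ‖xh - xplus s‖ ^ 2
      ≤ fmod x xh s + w xh + γ / 2 * ‖xh - x‖ ^ 2 := by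
    intro s
    have := strong_min (γ - κ) hγκ (fun y => fmod x y s + w y + γ / 2 * ‖y - x‖ ^ 2)
      (hFconv s) (xplus s) (fun y => hupdate s y) xh
    simpa using this
  set c1 : ℝ := w xh - w x + γ / 2 * ‖xh - x‖ ^ 2 with hc1
  set B : S → ℝ := fun s => (fmod x xh s - fmod x x s) + (c1 + (Lip x s + Lw) ^ 2 / (2 * γ))
    with hB
  -- pointwise bound on the distance
  have hstar : ∀ s, (γ - κ) / 2 * ‖xh - xplus s‖ ^ 2 ≤ B s := by
    intro s
    simp only [hB, hc1]
    have h1 := hstrong s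
    have h2 := hD1 x (xplus s) x s
    have h3 := le_of_abs_le (hw_lip x (xplus s))
    have h4 : ‖x - xplus s‖ = ‖xplus s - x‖ := norm_sub_rev x (xplus s)
    rw [h4] at h2 h3
    have hq : (Lip x s + Lw) * ‖xplus s - x‖
        ≤ γ / 2 * ‖xplus s - x‖ ^ 2 + (Lip x s + Lw) ^ 2 / (2 * γ) := by
      have hsq := div_nonneg (sq_nonneg (γ * ‖xplus s - x‖ - (Lip x s + Lw)))
        (by positivity : (0:ℝ) ≤ 2 * γ)
      have hid : (γ * ‖xplus s - x‖ - (Lip x s + Lw)) ^ 2 / (2 * γ)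
          = γ / 2 * ‖xplus s - x‖ ^ 2 - (Lip x s + Lw) * ‖xplus s - x‖
            + (Lip x s + Lw) ^ 2 / (2 * γ) := by
        field_simp; ring
      linarith [hid ▸ hsq]
    linarith
  -- pointwise bound on the Moreau envelope
  have hr0 : (0:ℝ) ≤ ρ / (γ - κ) := le_of_lt (div_pos hρ0 hγκ)
  have hpoint : ∀ s, moreau (xplus s) ≤ ψ xh + (ρ / (γ - κ)) * B s := by
    intro s
    have hm1 : moreau (xplus s) ≤ ψ xh + ρ / 2 * ‖xh - xplus s‖ ^ 2 := by
      rw [hmoreau (xplus s)]; exact hprox (xplus s) xh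
    have hmul := mul_le_mul_of_nonneg_left (hstar s) hr0
    have hidd : ρ / (γ - κ) * ((γ - κ) / 2 * ‖xh - xplus s‖ ^ 2)
        = ρ / 2 * ‖xh - xplus s‖ ^ 2 := by
      field_simp
    linarith [hidd ▸ hmul]
  -- integrability
  have hL2 := hLip_sq_int x
  have hLmeas : AEStronglyMeasurable (fun s => Lip x s) μ := by
    have h2 : AEStronglyMeasurable (fun s => Real.sqrt (Lip x s ^ 2)) μ :=
      Real.continuous_sqrt.comp_aestronglyMeasurable hL2.aestronglyMeasurable
    exact h2.congr (Filter.Eventually.of_forall fun s => Real.sqrt_sq (hLip_nonneg x s))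
  have hL1 : Integrable (fun s => Lip x s) μ := by
    refine Integrable.mono' (((integrable_const (1:ℝ)).add hL2).div_const 2) hLmeas
      (Filter.Eventually.of_forall fun s => ?_)
    rw [Real.norm_eq_abs, abs_of_nonneg (hLip_nonneg x s)]
    simp only [Pi.add_apply]
    nlinarith [sq_nonneg (Lip x s - 1)]
  have hJint : Integrable (fun s => (Lip x s + Lw) ^ 2) μ := by
    have h := hL2.add ((hL1.const_mul (2 * Lw)).add (integrable_const (Lw ^ 2)))
    refine h.congr (Filter.Eventually.of_forall fun s => ?_)
    simp only [Pi.add_apply]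
    ring
  have hBint : Integrable B μ :=
    ((hmodel_int x xh).sub (hmodel_int x x)).add
      ((integrable_const c1).add (hJint.div_const (2 * γ)))
  -- integrate the pointwise bound
  have hIle : ∫ s, moreau (xplus s) ∂μ ≤ ∫ s, (ψ xh + (ρ / (γ - κ)) * B s) ∂μ :=
    integral_mono hint ((integrable_const _).add (hBint.const_mul _)) hpoint
  have hIcalc : ∫ s, (ψ xh + (ρ / (γ - κ)) * B s) ∂μ
      = ψ xh + (ρ / (γ - κ)) * ∫ s, B s ∂μ := by
    rw [integral_add (integrable_const _) (hBint.const_mul _), integral_const,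
      integral_const_mul _ _]
    simp [measure_univ]
  have hBcalc : ∫ s, B s ∂μ
      = (∫ s, fmod x xh s ∂μ) - f x + (c1 + (∫ s, (Lip x s + Lw) ^ 2 ∂μ) / (2 * γ)) := by
    simp only [hB]
    have hint1 : Integrable (fun s => fmod x xh s - fmod x x s) μ :=
      (hmodel_int x xh).sub (hmodel_int x x)
    have hint2 : Integrable (fun s => c1 + (Lip x s + Lw) ^ 2 / (2 * γ)) μ :=
      (integrable_const c1).add (hJint.div_const (2 * γ))
    rw [integral_add hint1 hint2,
      integral_sub (hmodel_int x xh) (hmodel_int x x),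
      integral_add (integrable_const c1) (hJint.div_const (2 * γ)),
      integral_const, integral_div, hmodel_center x]
    simp [measure_univ]
  have hJgoal : ∫ s, ρ * (Lip x s + Lw) ^ 2 / (2 * γ * (γ - κ)) ∂μ
      = (ρ / (2 * γ * (γ - κ))) * ∫ s, (Lip x s + Lw) ^ 2 ∂μ := by
    have h2 : ∫ s, ρ * (Lip x s + Lw) ^ 2 / (2 * γ * (γ - κ)) ∂μ
        = ∫ s, (ρ / (2 * γ * (γ - κ))) * (Lip x s + Lw) ^ 2 ∂μ := by
      apply integral_congr_ae
      filter_upwards with s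
      ring
    rw [h2, integral_const_mul _ _]
  -- final bookkeeping
  set I1 := ∫ s, fmod x xh s ∂μ with hI1
  set J := ∫ s, (Lip x s + Lw) ^ 2 ∂μ with hJ
  set D := ‖xh - x‖ ^ 2 with hD
  have hacc : I1 - f xh ≤ τ / 2 * D := by
    have h := hmodel_acc x xh
    rw [show ‖x - xh‖ = ‖xh - x‖ from norm_sub_rev x xh] at h
    exact h
  have hproxx : ψ xh + ρ / 2 * D ≤ ψ x := by
    have h := hprox x x
    simpa using h
  have hbr : I1 - f x + (c1 + J / (2 * γ)) ≤ (τ + γ - ρ) / 2 * D + J / (2 * γ) := by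
    have e1 := hψdef xh
    have e2 := hψdef x
    simp only [hc1]
    linarith
  have hmul := mul_le_mul_of_nonneg_left hbr hr0
  have hkey : ψ xh + ρ / (γ - κ) * ((τ + γ - ρ) / 2 * D + J / (2 * γ))
      = (ψ xh + ρ / 2 * D) - ρ * (ρ - τ - κ) / (2 * (γ - κ)) * D
        + ρ / (2 * γ * (γ - κ)) * J := by
    field_simp
    ring
  have h6 : ρ / (γ - κ) * ∫ s, B s ∂μ
      = ρ / (γ - κ) * (I1 - f x + (c1 + J / (2 * γ))) := by rw [hBcalc]
  have hfin : ∫ s, moreau (xplus s) ∂μ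
      ≤ ψ xh + ρ / 2 * D - ρ * (ρ - τ - κ) / (2 * (γ - κ)) * D
        + ρ / (2 * γ * (γ - κ)) * J := by
    linarith [hIle, hIcalc, h6, hmul, hkey]
  rw [hJgoal, hmoreau x]
  exact hfin
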